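/- Let v₁, v₂ ∈ SVL[1,∞), α>0, θ ∈ [1,∞), and γ₁, γ₁', γ₂, γ₂' > 0 with δ := γ₂/γ₂' − γ₁/γ₁' < 0. Then there is C such that for all n ∈ ℕ, ∑_{0 ≤ s₂ < n/γ₂'} 2^{-s₂γ₂'δαθ} v₂(2^{s₂})^θ v₁(2^{(n−s₂γ₂')/γ₁'})^θ ≤ C · 2^{-nδαθ} v₂(2^{n/γ₂'})^θ. -/

import Mathlib

/-- `SVL[1,∞)`: positive measurable functions `v` on `[1,∞)` such that for every `ε > 0`,
`v(t) t^(-ε)` is almost decreasing and `v(t) (log₂ (2t))^ε` is increasing on `[1,∞)`. -/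
def SVL (v : ℝ → ℝ) : Prop :=
  Measurable v ∧ (∀ t ≥ (1:ℝ), 0 < v t) ∧
  (∀ ε > (0:ℝ), ∃ C > (0:ℝ), ∀ t u : ℝ, 1 ≤ u → u ≤ t →
    v t * t ^ (-ε) ≤ C * (v u * u ^ (-ε))) ∧
  (∀ ε > (0:ℝ), MonotoneOn (fun t => v t * (Real.logb 2 (2 * t)) ^ ε) (Set.Ici 1))

set_option maxHeartbeats 1000000

/-- (Case `δ < 0`.) For `v₁, v₂ ∈ SVL`, `α > 0`, `θ ∈ [1,∞)`, `γⱼ, γⱼ' > 0` with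
`δ := γ₂/γ₂' − γ₁/γ₁' < 0`, there is `C` such that for all `n`,
`∑_{0 ≤ s₂ < n/γ₂'} 2^{-s₂γ₂'δαθ} v₂(2^{s₂})^θ v₁(2^{(n−s₂γ₂')/γ₁'})^θ
  ≤ C · 2^{-nδαθ} v₂(2^{n/γ₂'})^θ`. -/
theorem stmt7 (v₁ v₂ : ℝ → ℝ) (h₁ : SVL v₁) (h₂ : SVL v₂)
    (α θ γ₁ γ₁' γ₂ γ₂' : ℝ) (hα : 0 < α) (hθ : 1 ≤ θ)
    (hγ₁ : 0 < γ₁) (hγ₁' : 0 < γ₁') (hγ₂ : 0 < γ₂) (hγ₂' : 0 < γ₂')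
    (hδ : γ₂ / γ₂' - γ₁ / γ₁' < 0) :
    ∃ C > (0:ℝ), ∀ n : ℕ,
      ∑ s₂ ∈ Finset.range ⌈(n:ℝ) / γ₂'⌉₊,
          (2:ℝ) ^ (-(s₂:ℝ) * γ₂' * (γ₂ / γ₂' - γ₁ / γ₁') * α * θ)
            * (v₂ ((2:ℝ) ^ (s₂:ℝ))) ^ θ
            * (v₁ ((2:ℝ) ^ (((n:ℝ) - s₂ * γ₂') / γ₁'))) ^ θ
        ≤ C * (2:ℝ) ^ (-(n:ℝ) * (γ₂ / γ₂' - γ₁ / γ₁') * α * θ)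
            * (v₂ ((2:ℝ) ^ ((n:ℝ) / γ₂'))) ^ θ := by
  obtain ⟨-, hv₁pos, hAD₁, -⟩ := h₁
  obtain ⟨-, hv₂pos, -, hMon₂⟩ := h₂
  set δ : ℝ := γ₂ / γ₂' - γ₁ / γ₁' with hδdef
  have hθ0 : (0:ℝ) < θ := lt_of_lt_of_le one_pos hθ
  set a : ℝ := -δ * α * θ with ha_def
  have ha : 0 < a := mul_pos (mul_pos (by linarith) hα) hθ0
  have hlog2 : 0 < Real.log 2 := Real.log_pos one_lt_two
  set ε : ℝ := min (a * γ₁' / (4 * θ)) (a * Real.log 2 / (4 * θ)) with hε_def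
  have hε : 0 < ε := lt_min (by positivity) (by positivity)
  obtain ⟨C₁, hC₁pos, hC₁⟩ := hAD₁ ε hε
  have hMon := hMon₂ ε hε
  have hεθγ : ε * θ / γ₁' ≤ a / 4 := by
    have h1 : ε ≤ a * γ₁' / (4 * θ) := min_le_left _ _
    rw [div_le_div_iff₀ hγ₁' (by norm_num : (0:ℝ) < 4)]
    have h2 : ε * θ ≤ a * γ₁' / (4 * θ) * θ :=
      mul_le_mul_of_nonneg_right h1 hθ0.le
    have h3 : a * γ₁' / (4 * θ) * θ = a * γ₁' / 4 := by field_simp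
    linarith
  have hεθlog : ε * θ ≤ a * Real.log 2 / 4 := by
    have h1 : ε ≤ a * Real.log 2 / (4 * θ) := min_le_right _ _
    have h2 : ε * θ ≤ a * Real.log 2 / (4 * θ) * θ :=
      mul_le_mul_of_nonneg_right h1 hθ0.le
    have h3 : a * Real.log 2 / (4 * θ) * θ = a * Real.log 2 / 4 := by field_simp
    linarith
  have hv₁1 : 0 < v₁ 1 := hv₁pos 1 le_rfl
  set K₀ : ℝ := (C₁ * v₁ 1) ^ θ * (1 + 1 / γ₂') ^ (ε * θ) with hK₀def
  have hK₀ : 0 < K₀ := by positivity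
  set r : ℝ := (2:ℝ) ^ (-(γ₂' * a / 2)) with hrdef
  have hr0 : 0 ≤ r := (Real.rpow_pos_of_pos two_pos _).le
  have hr1 : r < 1 := by
    apply Real.rpow_lt_one_of_one_lt_of_neg one_lt_two
    have : 0 < γ₂' * a / 2 := by positivity
    linarith
  have h1r : 0 < 1 - r := by linarith
  refine ⟨K₀ * (1 - r)⁻¹, by positivity, fun n => ?_⟩
  set m : ℕ := ⌈(n:ℝ) / γ₂'⌉₊ with hmdef
  have hVtop : 0 < v₂ ((2:ℝ) ^ ((n:ℝ) / γ₂')) := by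
    apply hv₂pos
    rw [show (1:ℝ) = (2:ℝ) ^ (0:ℝ) by rw [Real.rpow_zero]]
    exact Real.rpow_le_rpow_of_exponent_le one_le_two (by positivity)
  set X : ℝ := (2:ℝ) ^ (-(n:ℝ) * δ * α * θ) * (v₂ ((2:ℝ) ^ ((n:ℝ) / γ₂'))) ^ θ with hXdef
  have hXpos : 0 < X := by positivity
  have key : ∀ s₂ ∈ Finset.range m,
      (2:ℝ) ^ (-(s₂:ℝ) * γ₂' * δ * α * θ) * (v₂ ((2:ℝ) ^ (s₂:ℝ))) ^ θ
        * (v₁ ((2:ℝ) ^ (((n:ℝ) - (s₂:ℝ) * γ₂') / γ₁'))) ^ θ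
      ≤ K₀ * r ^ (m - 1 - s₂) * X := by
    intro s₂ hs₂
    rw [Finset.mem_range] at hs₂
    set S : ℝ := (s₂:ℝ) with hSdef
    have hSn : S < (n:ℝ) / γ₂' := Nat.lt_ceil.mp hs₂
    set k : ℝ := (n:ℝ) - S * γ₂' with hkdef
    have hk : 0 < k := by
      have := (lt_div_iff₀ hγ₂').mp hSn
      rw [hkdef]; linarith
    have hS0 : (0:ℝ) ≤ S := Nat.cast_nonneg s₂
    -- v₁ bound
    have ht1 : (1:ℝ) ≤ (2:ℝ) ^ (k / γ₁') := by
      rw [show (1:ℝ) = (2:ℝ) ^ (0:ℝ) by rw [Real.rpow_zero]]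
      exact Real.rpow_le_rpow_of_exponent_le one_le_two (by positivity)
    have ht1pos : (0:ℝ) < (2:ℝ) ^ (k / γ₁') := by positivity
    have hB1 : (v₁ ((2:ℝ) ^ (k / γ₁'))) ^ θ
        ≤ (C₁ * v₁ 1) ^ θ * (2:ℝ) ^ (k * (a / 4)) := by
      have h := hC₁ ((2:ℝ) ^ (k / γ₁')) 1 le_rfl ht1
      rw [Real.one_rpow, mul_one] at h
      have hv1b : v₁ ((2:ℝ) ^ (k / γ₁')) ≤ (C₁ * v₁ 1) * ((2:ℝ) ^ (k / γ₁')) ^ ε := by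
        have hrw : v₁ ((2:ℝ) ^ (k / γ₁'))
            = (v₁ ((2:ℝ) ^ (k / γ₁')) * ((2:ℝ) ^ (k / γ₁')) ^ (-ε))
              * ((2:ℝ) ^ (k / γ₁')) ^ ε := by
          rw [mul_assoc, ← Real.rpow_add ht1pos, neg_add_cancel, Real.rpow_zero, mul_one]
        rw [hrw]
        exact mul_le_mul_of_nonneg_right h (Real.rpow_nonneg ht1pos.le _)
      have hpow := Real.rpow_le_rpow (hv₁pos _ ht1).le hv1b hθ0.le
      have hsplit : ((C₁ * v₁ 1) * ((2:ℝ) ^ (k / γ₁')) ^ ε) ^ θ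
          = (C₁ * v₁ 1) ^ θ * (2:ℝ) ^ (k / γ₁' * (ε * θ)) := by
        rw [Real.mul_rpow (by positivity) (Real.rpow_nonneg ht1pos.le _),
          ← Real.rpow_mul (by norm_num : (0:ℝ) ≤ 2),
          ← Real.rpow_mul (by norm_num : (0:ℝ) ≤ 2), mul_assoc]
      have hexp : k / γ₁' * (ε * θ) ≤ k * (a / 4) := by
        have : k / γ₁' * (ε * θ) = k * (ε * θ / γ₁') := by ring
        rw [this]
        exact mul_le_mul_of_nonneg_left hεθγ hk.le
      calc (v₁ ((2:ℝ) ^ (k / γ₁'))) ^ θ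
          ≤ (C₁ * v₁ 1) ^ θ * (2:ℝ) ^ (k / γ₁' * (ε * θ)) := hsplit ▸ hpow
        _ ≤ (C₁ * v₁ 1) ^ θ * (2:ℝ) ^ (k * (a / 4)) := by
            exact mul_le_mul_of_nonneg_left
              (Real.rpow_le_rpow_of_exponent_le one_le_two hexp) (by positivity)
    -- v₂ bound
    have hx1 : (2:ℝ) ^ S ∈ Set.Ici (1:ℝ) := by
      rw [Set.mem_Ici, show (1:ℝ) = (2:ℝ) ^ (0:ℝ) by rw [Real.rpow_zero]]
      exact Real.rpow_le_rpow_of_exponent_le one_le_two hS0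
    have hy1 : (2:ℝ) ^ ((n:ℝ) / γ₂') ∈ Set.Ici (1:ℝ) := by
      rw [Set.mem_Ici, show (1:ℝ) = (2:ℝ) ^ (0:ℝ) by rw [Real.rpow_zero]]
      exact Real.rpow_le_rpow_of_exponent_le one_le_two (by positivity)
    have hxy : (2:ℝ) ^ S ≤ (2:ℝ) ^ ((n:ℝ) / γ₂') :=
      Real.rpow_le_rpow_of_exponent_le one_le_two hSn.le
    have hm := hMon hx1 hy1 hxy
    simp only at hm
    have hlogS : Real.logb 2 (2 * (2:ℝ) ^ S) = S + 1 := by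
      rw [show (2:ℝ) * (2:ℝ) ^ S = (2:ℝ) ^ (S + 1) by
        rw [Real.rpow_add two_pos, Real.rpow_one]; ring]
      exact Real.logb_rpow two_pos (by norm_num)
    have hlogN : Real.logb 2 (2 * (2:ℝ) ^ ((n:ℝ) / γ₂')) = (n:ℝ) / γ₂' + 1 := by
      rw [show (2:ℝ) * (2:ℝ) ^ ((n:ℝ) / γ₂') = (2:ℝ) ^ ((n:ℝ) / γ₂' + 1) by
        rw [Real.rpow_add two_pos, Real.rpow_one]; ring]
      exact Real.logb_rpow two_pos (by norm_num)
    rw [hlogS, hlogN] at hm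
    have hS1 : (0:ℝ) < S + 1 := by linarith
    set W : ℝ := (1 + 1 / γ₂') * (1 + k) with hWdef
    have hW0 : 0 < W := by positivity
    have hratio : (n:ℝ) / γ₂' + 1 ≤ (S + 1) * W := by
      have hNk : (n:ℝ) / γ₂' = S + k / γ₂' := by
        rw [hkdef]; field_simp; ring
      have hkγ : 0 ≤ k / γ₂' := by positivity
      have hg : 0 ≤ 1 / γ₂' := by positivity
      have step1 : 1 + k / γ₂' ≤ (1 + 1 / γ₂') * (1 + k) := by
        have e : (1 + 1 / γ₂') * (1 + k) = 1 + k / γ₂' + (k + 1 / γ₂') := by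
          field_simp; ring
        rw [e]; linarith
      have hh : (S + 1) * (1 + k / γ₂') = S + 1 + k / γ₂' + S * (k / γ₂') := by ring
      have hSk : 0 ≤ S * (k / γ₂') := mul_nonneg hS0 hkγ
      have step2 : (S + 1) * (1 + k / γ₂') ≤ (S + 1) * W := by
        rw [hWdef]
        exact mul_le_mul_of_nonneg_left step1 (by linarith)
      rw [hNk]
      calc S + k / γ₂' + 1 ≤ (S + 1) * (1 + k / γ₂') := by rw [hh]; linarith
        _ ≤ (S + 1) * W := step2
    have hv2b : v₂ ((2:ℝ) ^ S) ≤ v₂ ((2:ℝ) ^ ((n:ℝ) / γ₂')) * W ^ ε := by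
      have hstep : v₂ ((2:ℝ) ^ S) * (S + 1) ^ ε
          ≤ (v₂ ((2:ℝ) ^ ((n:ℝ) / γ₂')) * W ^ ε) * (S + 1) ^ ε := by
        have h2 : v₂ ((2:ℝ) ^ ((n:ℝ) / γ₂')) * ((n:ℝ) / γ₂' + 1) ^ ε
            ≤ v₂ ((2:ℝ) ^ ((n:ℝ) / γ₂')) * ((S + 1) * W) ^ ε := by
          exact mul_le_mul_of_nonneg_left
            (Real.rpow_le_rpow (by positivity) hratio hε.le) hVtop.le
        have h3 : ((S + 1) * W) ^ ε = (S + 1) ^ ε * W ^ ε :=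
          Real.mul_rpow hS1.le hW0.le
        calc v₂ ((2:ℝ) ^ S) * (S + 1) ^ ε
            ≤ v₂ ((2:ℝ) ^ ((n:ℝ) / γ₂')) * ((n:ℝ) / γ₂' + 1) ^ ε := hm
          _ ≤ v₂ ((2:ℝ) ^ ((n:ℝ) / γ₂')) * ((S + 1) * W) ^ ε := h2
          _ = (v₂ ((2:ℝ) ^ ((n:ℝ) / γ₂')) * W ^ ε) * (S + 1) ^ ε := by
              rw [h3]; ring
      exact le_of_mul_le_mul_right hstep (Real.rpow_pos_of_pos hS1 ε)
    have honek : (1:ℝ) ≤ 1 + k := by linarith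
    have hB2 : (v₂ ((2:ℝ) ^ S)) ^ θ
        ≤ (v₂ ((2:ℝ) ^ ((n:ℝ) / γ₂'))) ^ θ * (1 + 1 / γ₂') ^ (ε * θ)
          * (2:ℝ) ^ (k * (a / 4)) := by
      have hpow := Real.rpow_le_rpow (hv₂pos _ hx1).le hv2b hθ0.le
      have hsplit : (v₂ ((2:ℝ) ^ ((n:ℝ) / γ₂')) * W ^ ε) ^ θ
          = (v₂ ((2:ℝ) ^ ((n:ℝ) / γ₂'))) ^ θ * (1 + 1 / γ₂') ^ (ε * θ)
            * (1 + k) ^ (ε * θ) := by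
        rw [Real.mul_rpow hVtop.le (Real.rpow_nonneg hW0.le _),
          ← Real.rpow_mul hW0.le, hWdef,
          Real.mul_rpow (by positivity) (by positivity : (0:ℝ) ≤ 1 + k), mul_assoc]
      have hek : (1 + k) ^ (ε * θ) ≤ (2:ℝ) ^ (k * (a / 4)) := by
        have h1 : (1 + k) ≤ Real.exp k := by
          have := Real.add_one_le_exp k; linarith
        have h2 : (1 + k) ^ (ε * θ) ≤ (Real.exp k) ^ (ε * θ) :=
          Real.rpow_le_rpow (by linarith) h1 (by positivity)
        have h3 : (Real.exp k) ^ (ε * θ) = Real.exp (k * (ε * θ)) :=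
          (Real.exp_mul k (ε * θ)).symm
        have h4 : Real.exp (k * (ε * θ)) ≤ Real.exp (k * (a * Real.log 2 / 4)) :=
          Real.exp_le_exp.mpr (mul_le_mul_of_nonneg_left hεθlog hk.le)
        have h5 : (2:ℝ) ^ (k * (a / 4)) = Real.exp (Real.log 2 * (k * (a / 4))) :=
          Real.rpow_def_of_pos two_pos _
        have h6 : k * (a * Real.log 2 / 4) = Real.log 2 * (k * (a / 4)) := by ring
        rw [h5, ← h6]
        exact h2.trans (h3 ▸ h4)
      calc (v₂ ((2:ℝ) ^ S)) ^ θ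
          ≤ (v₂ ((2:ℝ) ^ ((n:ℝ) / γ₂'))) ^ θ * (1 + 1 / γ₂') ^ (ε * θ)
            * (1 + k) ^ (ε * θ) := hsplit ▸ hpow
        _ ≤ _ := by
            exact mul_le_mul_of_nonneg_left hek (by positivity)
    -- combine
    have hcomb : (2:ℝ) ^ (-S * γ₂' * δ * α * θ) * (v₂ ((2:ℝ) ^ S)) ^ θ
        * (v₁ ((2:ℝ) ^ (k / γ₁'))) ^ θ
        ≤ K₀ * (2:ℝ) ^ ((n:ℝ) * a - k * (a / 2))
          * (v₂ ((2:ℝ) ^ ((n:ℝ) / γ₂'))) ^ θ := by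
      have step : (2:ℝ) ^ (-S * γ₂' * δ * α * θ) * (v₂ ((2:ℝ) ^ S)) ^ θ
          * (v₁ ((2:ℝ) ^ (k / γ₁'))) ^ θ
          ≤ (2:ℝ) ^ (-S * γ₂' * δ * α * θ)
            * ((v₂ ((2:ℝ) ^ ((n:ℝ) / γ₂'))) ^ θ * (1 + 1 / γ₂') ^ (ε * θ)
              * (2:ℝ) ^ (k * (a / 4)))
            * ((C₁ * v₁ 1) ^ θ * (2:ℝ) ^ (k * (a / 4))) := by
        apply mul_le_mul _ hB1 (Real.rpow_nonneg (hv₁pos _ ht1).le θ) (by positivity)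
        exact mul_le_mul_of_nonneg_left hB2 (by positivity)
      have heq : (2:ℝ) ^ (-S * γ₂' * δ * α * θ)
            * ((v₂ ((2:ℝ) ^ ((n:ℝ) / γ₂'))) ^ θ * (1 + 1 / γ₂') ^ (ε * θ)
              * (2:ℝ) ^ (k * (a / 4)))
            * ((C₁ * v₁ 1) ^ θ * (2:ℝ) ^ (k * (a / 4)))
          = K₀ * (2:ℝ) ^ ((n:ℝ) * a - k * (a / 2))
            * (v₂ ((2:ℝ) ^ ((n:ℝ) / γ₂'))) ^ θ := by
        have hee : (n:ℝ) * a - k * (a / 2)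
            = -S * γ₂' * δ * α * θ + (k * (a / 4) + k * (a / 4)) := by
          rw [ha_def, hkdef]; ring
        rw [hee, Real.rpow_add two_pos, Real.rpow_add two_pos, hK₀def]
        ring
      exact step.trans_eq heq
    have hrj : (2:ℝ) ^ ((n:ℝ) * a - k * (a / 2))
        ≤ (2:ℝ) ^ ((n:ℝ) * a) * r ^ (m - 1 - s₂) := by
      have hm1 : ((m - 1 : ℕ):ℝ) < (n:ℝ) / γ₂' := by
        apply Nat.lt_ceil.mp
        exact Nat.sub_lt (Nat.pos_of_ne_zero (by omega)) one_pos
      have hcast : ((m - 1 - s₂ : ℕ):ℝ) = ((m - 1 : ℕ):ℝ) - S := by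
        rw [hSdef, Nat.cast_sub (show s₂ ≤ m - 1 by omega)]
      have hjk : ((m - 1 - s₂ : ℕ):ℝ) * γ₂' ≤ k := by
        rw [hcast, hkdef]
        have h5 : ((m - 1 : ℕ):ℝ) * γ₂' < (n:ℝ) := (lt_div_iff₀ hγ₂').mp hm1
        have h6 : (((m - 1 : ℕ):ℝ) - S) * γ₂' = ((m - 1 : ℕ):ℝ) * γ₂' - S * γ₂' := by ring
        linarith
      have h2' : (2:ℝ) ^ (-(k * (a / 2)))
          ≤ (2:ℝ) ^ (-(γ₂' * a / 2) * ((m - 1 - s₂ : ℕ):ℝ)) := by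
        apply Real.rpow_le_rpow_of_exponent_le one_le_two
        have hmul := mul_le_mul_of_nonneg_right hjk
          (le_of_lt (by positivity : (0:ℝ) < a / 2))
        have e : -(γ₂' * a / 2) * ((m - 1 - s₂ : ℕ):ℝ)
            = -(((m - 1 - s₂ : ℕ):ℝ) * γ₂' * (a / 2)) := by ring
        rw [e]
        linarith
      have h3' : (2:ℝ) ^ (-(γ₂' * a / 2) * ((m - 1 - s₂ : ℕ):ℝ)) = r ^ (m - 1 - s₂) := by
        rw [hrdef, ← Real.rpow_natCast ((2:ℝ) ^ (-(γ₂' * a / 2))) (m - 1 - s₂),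
          ← Real.rpow_mul (by norm_num : (0:ℝ) ≤ 2)]
      calc (2:ℝ) ^ ((n:ℝ) * a - k * (a / 2))
          = (2:ℝ) ^ ((n:ℝ) * a) * (2:ℝ) ^ (-(k * (a / 2))) := by
            rw [← Real.rpow_add two_pos]; ring_nf
        _ ≤ (2:ℝ) ^ ((n:ℝ) * a) * r ^ (m - 1 - s₂) := by
            rw [← h3']
            exact mul_le_mul_of_nonneg_left h2' (by positivity)
    have hna : (2:ℝ) ^ ((n:ℝ) * a) = (2:ℝ) ^ (-(n:ℝ) * δ * α * θ) := by
      rw [ha_def]; ring_nf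
    calc (2:ℝ) ^ (-S * γ₂' * δ * α * θ) * (v₂ ((2:ℝ) ^ S)) ^ θ
        * (v₁ ((2:ℝ) ^ (k / γ₁'))) ^ θ
        ≤ K₀ * (2:ℝ) ^ ((n:ℝ) * a - k * (a / 2))
          * (v₂ ((2:ℝ) ^ ((n:ℝ) / γ₂'))) ^ θ := hcomb
      _ ≤ K₀ * ((2:ℝ) ^ ((n:ℝ) * a) * r ^ (m - 1 - s₂))
          * (v₂ ((2:ℝ) ^ ((n:ℝ) / γ₂'))) ^ θ := by
          apply mul_le_mul_of_nonneg_right _ (by positivity)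
          exact mul_le_mul_of_nonneg_left hrj hK₀.le
      _ = K₀ * r ^ (m - 1 - s₂) * X := by
          rw [hXdef, ← hna]; ring
  calc ∑ s₂ ∈ Finset.range m,
        (2:ℝ) ^ (-(s₂:ℝ) * γ₂' * δ * α * θ) * (v₂ ((2:ℝ) ^ (s₂:ℝ))) ^ θ
          * (v₁ ((2:ℝ) ^ (((n:ℝ) - (s₂:ℝ) * γ₂') / γ₁'))) ^ θ
      ≤ ∑ s₂ ∈ Finset.range m, K₀ * r ^ (m - 1 - s₂) * X := Finset.sum_le_sum key
    _ = K₀ * (∑ s₂ ∈ Finset.range m, r ^ (m - 1 - s₂)) * X := by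
        rw [Finset.mul_sum, Finset.sum_mul]
    _ = K₀ * (∑ j ∈ Finset.range m, r ^ j) * X := by
        rw [Finset.sum_range_reflect (fun j => r ^ j) m]
    _ ≤ K₀ * (1 - r)⁻¹ * X := by
        apply mul_le_mul_of_nonneg_right _ hXpos.le
        apply mul_le_mul_of_nonneg_left _ hK₀.le
        have hsum := Summable.sum_le_tsum (Finset.range m)
          (fun i _ => pow_nonneg hr0 i) (summable_geometric_of_lt_one hr0 hr1)
        rwa [tsum_geometric_of_lt_one hr0 hr1] at hsum
    _ = K₀ * (1 - r)⁻¹ * (2:ℝ) ^ (-(n:ℝ) * δ * α * θ)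
        * (v₂ ((2:ℝ) ^ ((n:ℝ) / γ₂'))) ^ θ := by
        rw [hXdef]; ring
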